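/- Let X be a heap, f an idempotent heap endomorphism of X with kernel ω, Y = f(X), and e ∈ Y fixed. Then [e]_ω = f^{-1}(e), and the map α : Y → Aut_Heap([e]_ω) defined by α_y(k) = [y, e, [k, y, e]] is a heap homomorphism into the automorphism heap of [e]_ω (with heap structure [f,g,h] = f ∘ g^{-1} ∘ h), with α_e = id. -/
import Mathlib


/-- A heap: a set with an associative Mal'tsev ternary operation. -/
structure Heap (X : Type*) where
  op : X → X → X → X
  mal1 : ∀ x y, op x x y = y
  mal2 : ∀ x y, op x y y = x
  assoc : ∀ x y z w u, op (op x y z) w u = op x y (op z w u)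

theorem Heap.cancel {X : Type*} (H : Heap X) (x y z w : X) :
    H.op x y (H.op y z w) = H.op x z w := by
  rw [← H.assoc, H.mal2]

theorem Heap.mid {X : Type*} (H : Heap X) (x p q r w : X) :
    H.op x (H.op p q r) w = H.op x r (H.op q p w) := by
  have h : H.op (H.op p q r) r (H.op q p w) = w := by
    rw [H.assoc, H.mal1, H.cancel, H.mal1]
  calc H.op x (H.op p q r) w
      = H.op x (H.op p q r) (H.op (H.op p q r) r (H.op q p w)) := by rw [h]
    _ = H.op x r (H.op q p w) := H.cancel ..

/-- Let `X` be a heap, `f` an idempotent heap endomorphism with kernel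
`ω = {(x,y) : f x = f y}`, `Y = f(X)`, `e ∈ Y`, and `K = [e]_ω`. Then
`[e]_ω = f⁻¹(e)`, and `α : Y → Aut_Heap(K)`, `α_y(k) = [y, e, [k, y, e]]`, is a
heap homomorphism into the automorphism heap of `K` (with heap operation
`[f,g,h] = f ∘ g⁻¹ ∘ h`), with `α_e = id`. Here the homomorphism property is
expressed via `m = α_{y₂}⁻¹(α_{y₃}(k))`. -/
theorem stmt13 {X : Type*} (H : Heap X) (f : X → X)
    (hf_endo : ∀ x y z, f (H.op x y z) = H.op (f x) (f y) (f z))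
    (hf_idem : f ∘ f = f)
    (e : X) (he : e ∈ Set.range f) :
    ({x | f x = f e} = f ⁻¹' {e}) ∧
    (∀ y ∈ Set.range f,
      Set.BijOn (fun k => H.op y e (H.op k y e)) {x | f x = f e} {x | f x = f e} ∧
      (∀ k₁ ∈ {x | f x = f e}, ∀ k₂ ∈ {x | f x = f e}, ∀ k₃ ∈ {x | f x = f e},
        H.op y e (H.op (H.op k₁ k₂ k₃) y e) =
          H.op (H.op y e (H.op k₁ y e)) (H.op y e (H.op k₂ y e))
            (H.op y e (H.op k₃ y e)))) ∧
    (∀ y₁ ∈ Set.range f, ∀ y₂ ∈ Set.range f, ∀ y₃ ∈ Set.range f,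
      ∀ k ∈ {x | f x = f e}, ∀ m ∈ {x | f x = f e},
        H.op y₂ e (H.op m y₂ e) = H.op y₃ e (H.op k y₃ e) →
          H.op (H.op y₁ y₂ y₃) e (H.op k (H.op y₁ y₂ y₃) e) =
            H.op y₁ e (H.op m y₁ e)) ∧
    (∀ k ∈ {x | f x = f e}, H.op e e (H.op k e e) = k) := by
  have hfix : ∀ x ∈ Set.range f, f x = x := by
    rintro x ⟨a, rfl⟩; exact congrFun hf_idem a
  have hfe : f e = e := hfix e he
  have mem_iff : ∀ x, x ∈ {x | f x = f e} ↔ f x = e := by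
    intro x; simp [hfe]
  refine ⟨?_, ?_, ?_, ?_⟩
  · ext x; simp [hfe]
  · intro y hy
    have hfy : f y = y := hfix y hy
    constructor
    · -- BijOn
      have hmaps : Set.MapsTo (fun k => H.op y e (H.op k y e))
          {x | f x = f e} {x | f x = f e} := by
        intro k hk
        have hk' : f k = e := (mem_iff k).1 hk
        show f _ = f e
        simp [hf_endo, hfy, hfe, hk', H.assoc, H.mal1, H.mal2, H.cancel, H.mid]
      have hmaps' : Set.MapsTo (fun m => H.op e y (H.op m e y))
          {x | f x = f e} {x | f x = f e} := by
        intro m hm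
        have hm' : f m = e := (mem_iff m).1 hm
        show f _ = f e
        simp [hf_endo, hfy, hfe, hm', H.assoc, H.mal1, H.mal2, H.cancel, H.mid]
      have hleft : ∀ k, H.op e y (H.op (H.op y e (H.op k y e)) e y) = k := by
        intro k
        simp [H.assoc, H.mal1, H.mal2, H.cancel, H.mid]
      have hright : ∀ m, H.op y e (H.op (H.op e y (H.op m e y)) y e) = m := by
        intro m
        simp [H.assoc, H.mal1, H.mal2, H.cancel, H.mid]
      refine ⟨hmaps, ?_, ?_⟩
      · intro a _ b _ hab
        have := congrArg (fun t => H.op e y (H.op t e y)) hab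
        simpa [hleft] using this
      · intro m hm
        exact ⟨H.op e y (H.op m e y), hmaps' hm, hright m⟩
    · intro k₁ _ k₂ _ k₃ _
      simp [H.assoc, H.mal1, H.mal2, H.cancel, H.mid]
  · intro y₁ hy₁ y₂ hy₂ y₃ hy₃ k hk m hm hyp
    have key : ∀ (a b : X) (A : X),
        H.op (H.op a b (H.op A b a)) e e = H.op a b (H.op A b a) := fun a b A =>
      H.mal2 _ _
    -- rewrite both sides via the identity conj_{[y₁,y₂,y₃]} k = y₁ y₂⁻¹ (conj_{y₃} k) y₂ y₁⁻¹
    have lhs_eq : H.op (H.op y₁ y₂ y₃) e (H.op k (H.op y₁ y₂ y₃) e) =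
        H.op (H.op y₁ y₂ (H.op y₃ e (H.op k y₃ e))) (H.op y₁ y₂ e) e := by
      simp [H.assoc, H.mal1, H.mal2, H.cancel, H.mid]
    have rhs_eq : H.op (H.op y₁ y₂ (H.op y₂ e (H.op m y₂ e))) (H.op y₁ y₂ e) e =
        H.op y₁ e (H.op m y₁ e) := by
      simp [H.assoc, H.mal1, H.mal2, H.cancel, H.mid]
    rw [lhs_eq, ← hyp, rhs_eq]
  · intro k _
    simp [H.mal1, H.mal2]
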